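/- arXiv:2504.21601 — 2 statements merged into one kernel-verified Lean document; each statement's English description precedes it below -/
import Mathlib

section
/- Let α be a d-face in the clique complex of a graph G. Then the number of neighbouring d-faces of α satisfies |N_α| = Σ_{γ ∈ ∂α} |π_γ| − (d+1). -/
variable {V : Type*} [DecidableEq V]

/-- `α₁` and `α₂` (both `d`-faces) share a common `(d-1)`-face. -/
def SharesBoundaryFace (d : ℕ) (α₁ α₂ : Finset V) : Prop :=
  ∃ γ : Finset V, γ.card = d ∧ γ ⊆ α₁ ∧ γ ⊆ α₂

/-- `α₁` and `α₂` are both contained in a common `(d+1)`-face of the clique complex. -/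
def SharesCoface (G : SimpleGraph V) (d : ℕ) (α₁ α₂ : Finset V) : Prop :=
  ∃ β : Finset V, G.IsNClique (d + 2) β ∧ α₁ ⊆ β ∧ α₂ ⊆ β

/-- `α₂` is a neighbour of the `d`-face `α₁`. -/
def IsNeighbour (G : SimpleGraph V) (d : ℕ) (α₁ α₂ : Finset V) : Prop :=
  α₁ ≠ α₂ ∧ (SharesBoundaryFace d α₁ α₂ ∨ SharesCoface G d α₁ α₂)

/-- `α₂` is a parallel neighbour of the `d`-face `α₁`. -/
def IsParallelNeighbour (G : SimpleGraph V) (d : ℕ) (α₁ α₂ : Finset V) : Prop :=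
  α₁ ≠ α₂ ∧ SharesBoundaryFace d α₁ α₂ ∧ ¬ SharesCoface G d α₁ α₂

/-- `α₂` is a transverse neighbour of the `d`-face `α₁`. -/
def IsTransverseNeighbour (G : SimpleGraph V) (d : ℕ) (α₁ α₂ : Finset V) : Prop :=
  α₁ ≠ α₂ ∧ SharesBoundaryFace d α₁ α₂ ∧ SharesCoface G d α₁ α₂

/-- The set `N_α` of neighbouring `d`-faces of `α` in the clique complex of `G`. -/
def neighbourSet (G : SimpleGraph V) (d : ℕ) (α : Finset V) : Set (Finset V) :=
  {α' : Finset V | G.IsNClique (d + 1) α' ∧ IsNeighbour G d α α'}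

/-- The set `P_α` of parallel neighbours of `α`. -/
def parallelSet (G : SimpleGraph V) (d : ℕ) (α : Finset V) : Set (Finset V) :=
  {α' : Finset V | G.IsNClique (d + 1) α' ∧ IsParallelNeighbour G d α α'}

/-- The set `T_α` of transverse neighbours of `α`. -/
def transverseSet (G : SimpleGraph V) (d : ℕ) (α : Finset V) : Set (Finset V) :=
  {α' : Finset V | G.IsNClique (d + 1) α' ∧ IsTransverseNeighbour G d α α'}

/-- The set `H_α` of `(d+1)`-faces containing the `d`-face `α` in their boundary. -/
def cofaceSet (G : SimpleGraph V) (d : ℕ) (α : Finset V) : Set (Finset V) :=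
  {β : Finset V | G.IsNClique (d + 2) β ∧ α ⊆ β}

/-- The common graph-neighbourhood `π_γ` of a set of vertices `γ`. -/
def piSet (G : SimpleGraph V) (γ : Finset V) : Set V :=
  {x : V | ∀ v ∈ γ, G.Adj v x}

/-- For a `d`-face `α` of the clique complex of `G`, the number of
neighbouring `d`-faces satisfies `|N_α| = Σ_{γ ∈ ∂α} |π_γ| − (d+1)`. -/
theorem neighbourSet_ncard [Fintype V] (G : SimpleGraph V) (d : ℕ) (α : Finset V)
    (hα : G.IsNClique (d + 1) α) :
    ((neighbourSet G d α).ncard : ℤ) =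
      (∑ γ ∈ Finset.powersetCard d α, ((piSet G γ).ncard : ℤ)) - (d + 1) := by
  classical
  -- Finset version of piSet
  set pF : Finset V → Finset V := fun γ => Finset.univ.filter (fun x => ∀ v ∈ γ, G.Adj v x)
    with hpF
  have hpiSet : ∀ γ : Finset V, piSet G γ = ↑(pF γ) := by
    intro γ
    ext x
    simp [piSet, hpF]
  -- the neighbour finset
  set N : Finset (Finset V) :=
    (Finset.powersetCard d α).biUnion
      (fun γ => (pF γ \ α).image (fun x => insert x γ)) with hN
  -- characterization of the neighbour set
  have hmem : ∀ α' : Finset V, α' ∈ neighbourSet G d α ↔ α' ∈ N := by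
    intro α'
    constructor
    · rintro ⟨hclq, hne, hrel⟩
      -- reduce coface case to boundary face case
      have hbd : SharesBoundaryFace d α α' := by
        rcases hrel with h | ⟨β, hβ, hαβ, hα'β⟩
        · exact h
        · have hcard : d ≤ (α ∩ α').card := by
            have h1 : (α ∪ α').card ≤ d + 2 :=
              hβ.2 ▸ Finset.card_le_card (Finset.union_subset hαβ hα'β)
            have h2 : (α ∪ α').card + (α ∩ α').card = (d + 1) + (d + 1) := by
              rw [Finset.card_union_add_card_inter, hα.2, hclq.2]
            omega
          obtain ⟨γ, hγsub, hγcard⟩ := Finset.exists_subset_card_eq hcard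
          exact ⟨γ, hγcard, hγsub.trans Finset.inter_subset_left,
            hγsub.trans Finset.inter_subset_right⟩
      obtain ⟨γ, hγcard, hγα, hγα'⟩ := hbd
      -- the unique vertex of α' \ γ
      have hcard1 : (α' \ γ).card = 1 := by
        rw [Finset.card_sdiff_of_subset hγα', hclq.2, hγcard]; omega
      obtain ⟨x, hx⟩ := Finset.card_eq_one.mp hcard1
      have hxmem : x ∈ α' \ γ := hx ▸ Finset.mem_singleton_self x
      have hxα' : x ∈ α' := (Finset.mem_sdiff.mp hxmem).1
      have hxγ : x ∉ γ := (Finset.mem_sdiff.mp hxmem).2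
      have hα'eq : α' = insert x γ := by
        apply Finset.eq_of_subset_of_card_le
        · intro y hy
          by_cases hyγ : y ∈ γ
          · exact Finset.mem_insert_of_mem hyγ
          · have : y ∈ α' \ γ := Finset.mem_sdiff.mpr ⟨hy, hyγ⟩
            rw [hx, Finset.mem_singleton] at this
            exact this ▸ Finset.mem_insert_self y γ
        · rw [Finset.card_insert_of_notMem hxγ, hclq.2, hγcard]
      have hxα : x ∉ α := by
        intro hxa
        apply hne
        apply (Finset.eq_of_subset_of_card_le _ _).symm
        · rw [hα'eq]
          exact Finset.insert_subset hxa hγα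
        · rw [hα.2, hclq.2]
      have hxpi : x ∈ pF γ := by
        simp only [hpF, Finset.mem_filter, Finset.mem_univ, true_and]
        intro v hv
        exact hclq.1 (hγα' hv) hxα' (fun h => hxγ (h ▸ hv))
      rw [hN]
      simp only [Finset.mem_biUnion, Finset.mem_powersetCard, Finset.mem_image,
        Finset.mem_sdiff]
      exact ⟨γ, ⟨hγα, hγcard⟩, x, ⟨hxpi, hxα⟩, hα'eq.symm⟩
    · rw [hN]
      simp only [Finset.mem_biUnion, Finset.mem_powersetCard, Finset.mem_image,
        Finset.mem_sdiff]
      rintro ⟨γ, ⟨hγα, hγcard⟩, x, ⟨hxpi, hxα⟩, rfl⟩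
      have hxγ : x ∉ γ := fun h => hxα (hγα h)
      have hadj : ∀ v ∈ γ, G.Adj v x := by
        simpa [hpF] using hxpi
      refine ⟨⟨?_, ?_⟩, ?_, Or.inl ⟨γ, hγcard, hγα, Finset.subset_insert x γ⟩⟩
      · rw [Finset.coe_insert]
        exact (hα.1.subset hγα).insert (fun v hv _ => (hadj v hv).symm)
      · rw [Finset.card_insert_of_notMem hxγ, hγcard]
      · intro h
        exact hxα (h ▸ Finset.mem_insert_self x γ)
  have hset : neighbourSet G d α = ↑N := Set.ext fun α' => (hmem α').trans (by simp)
  rw [hset, Set.ncard_coe_finset]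
  -- count the biUnion
  have hdisj : ∀ γ₁ ∈ Finset.powersetCard d α, ∀ γ₂ ∈ Finset.powersetCard d α, γ₁ ≠ γ₂ →
      Disjoint ((pF γ₁ \ α).image (fun x => insert x γ₁))
        ((pF γ₂ \ α).image (fun x => insert x γ₂)) := by
    intro γ₁ h₁ γ₂ h₂ hne
    rw [Finset.mem_powersetCard] at h₁ h₂
    rw [Finset.disjoint_left]
    rintro s hs₁ hs₂
    simp only [Finset.mem_image, Finset.mem_sdiff] at hs₁ hs₂
    obtain ⟨x, ⟨_, hxα⟩, rfl⟩ := hs₁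
    obtain ⟨y, ⟨_, hyα⟩, heq⟩ := hs₂
    apply hne
    have key : ∀ (z : V) (γ : Finset V), z ∉ α → γ ⊆ α → insert z γ ∩ α = γ := by
      intro z γ hz hγ
      rw [Finset.insert_inter_of_notMem hz, Finset.inter_eq_left.mpr hγ]
    rw [← key x γ₁ hxα h₁.1, ← key y γ₂ hyα h₂.1, heq]
  rw [Finset.card_biUnion hdisj, Nat.cast_sum]
  have hterm : ∀ γ ∈ Finset.powersetCard d α,
      (((pF γ \ α).image (fun x => insert x γ)).card : ℤ) = ((piSet G γ).ncard : ℤ) - 1 := by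
    intro γ hγ
    rw [Finset.mem_powersetCard] at hγ
    -- card of image
    have hinj : Set.InjOn (fun x => insert x γ) ↑(pF γ \ α) := by
      intro x hx y hy hxy
      simp only [Finset.coe_sdiff, Set.mem_diff, Finset.mem_coe] at hx hy
      simp only at hxy
      have : x ∈ insert y γ := hxy ▸ Finset.mem_insert_self x γ
      rcases Finset.mem_insert.mp this with h | h
      · exact h
      · exact absurd (hγ.1 h) hx.2
    rw [Finset.card_image_of_injOn hinj]
    -- pF γ ∩ α = α \ γ
    have hinter : pF γ ∩ α = α \ γ := by
      ext x
      simp only [hpF, Finset.mem_inter, Finset.mem_filter, Finset.mem_univ, true_and,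
        Finset.mem_sdiff]
      constructor
      · rintro ⟨hadj, hxα⟩
        exact ⟨hxα, fun hxγ => G.loopless.irrefl x (hadj x hxγ)⟩
      · rintro ⟨hxα, hxγ⟩
        exact ⟨fun v hv => hα.1 (hγ.1 hv) hxα (fun h => hxγ (h ▸ hv)), hxα⟩
    have hinter1 : (pF γ ∩ α).card = 1 := by
      rw [hinter, Finset.card_sdiff_of_subset hγ.1, hα.2, hγ.2]; omega
    have hkey : (pF γ ∩ α).card + (pF γ \ α).card = (pF γ).card :=
      Finset.card_inter_add_card_sdiff _ _
    have hpicard : (piSet G γ).ncard = (pF γ).card := by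
      rw [hpiSet, Set.ncard_coe_finset]
    rw [hpicard]
    omega
  rw [Finset.sum_congr rfl hterm, Finset.sum_sub_distrib, Finset.sum_const,
    Finset.card_powersetCard, hα.2]
  have : (d + 1).choose d = d + 1 := Nat.choose_succ_self_right d
  rw [this]

  ring
end

section
/- For any d-face α in the clique complex of a graph G, the Forman–Ricci curvature admits the set-theoretic formula F(α) = (d+2)·|⋂_{γ ∈ ∂α} π_γ| + 2(d+1) − Σ_{γ ∈ ∂α} |π_γ|. -/
variable {V : Type*} [DecidableEq V]

lemma pi_not_mem {G : SimpleGraph V} {γ : Finset V} {x : V} (hx : x ∈ piSet G γ) : x ∉ γ :=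
  fun h => G.irrefl (hx x h)

lemma pi_anti {G : SimpleGraph V} {γ δ : Finset V} (h : γ ⊆ δ) : piSet G δ ⊆ piSet G γ :=
  fun _ hx v hv => hx v (h hv)

lemma mem_pi_of_clique {G : SimpleGraph V} {α γ : Finset V} (hα : G.IsClique (α : Set V))
    (hγ : γ ⊆ α) {v : V} (hv : v ∈ α) (hvγ : v ∉ γ) : v ∈ piSet G γ := by
  intro w hw
  exact hα (hγ hw) hv (fun h => hvγ (h ▸ hw))

lemma insert_clique {G : SimpleGraph V} {γ : Finset V} {x : V} (hγ : G.IsClique (γ : Set V))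
    (hx : x ∈ piSet G γ) : G.IsClique ((insert x γ : Finset V) : Set V) := by
  rw [Finset.coe_insert]
  exact hγ.insert (fun b hb _ => (hx b hb).symm)

lemma inter_eq {α γ : Finset V} {x : V} (hγα : γ ⊆ α) (hx : x ∉ α) :
    (insert x γ) ∩ α = γ := by
  ext y
  simp only [Finset.mem_inter, Finset.mem_insert]
  constructor
  · rintro ⟨h1 | h1, h2⟩
    · exact absurd (h1 ▸ h2) hx
    · exact h1
  · exact fun h => ⟨Or.inr h, hγα h⟩

set_option linter.unusedSectionVars false

lemma iInter_pi_eq {G : SimpleGraph V} {d : ℕ} {α : Finset V} (hd : 1 ≤ d)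
    (hα : G.IsNClique (d + 1) α) :
    (⋂ γ ∈ (Finset.powersetCard d α : Finset (Finset V)), piSet G γ) = piSet G α := by
  ext x
  simp only [Set.mem_iInter, Finset.mem_powersetCard]
  constructor
  · intro h v hv
    obtain ⟨u, hu, huv⟩ : ∃ u ∈ α, u ≠ v := by
      have : 1 < α.card := by rw [hα.2]; omega
      exact Finset.exists_mem_ne this v
    exact h (α.erase u) ⟨Finset.erase_subset _ _, by rw [Finset.card_erase_of_mem hu, hα.2]; omega⟩
      v (Finset.mem_erase.2 ⟨fun h' => huv h'.symm, hv⟩)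
  · intro h γ hγ
    exact pi_anti hγ.1 h

lemma coface_eq {G : SimpleGraph V} {d : ℕ} {α : Finset V} (hα : G.IsNClique (d + 1) α) :
    {β : Finset V | G.IsNClique (d + 2) β ∧ α ⊆ β} = (fun x => insert x α) '' piSet G α := by
  ext β
  simp only [Set.mem_setOf_eq, Set.mem_image]
  constructor
  · rintro ⟨hβ, hsub⟩
    obtain ⟨x, hx⟩ : ∃ x, β \ α = {x} := by
      rw [← Finset.card_eq_one, Finset.card_sdiff_of_subset hsub, hβ.2, hα.2]; omega
    have hxβ : x ∈ β ∧ x ∉ α := by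
      have := hx ▸ Finset.mem_sdiff (s := β) (t := α) (a := x)
      simp_all
    refine ⟨x, ?_, ?_⟩
    · intro v hv
      exact hβ.1 (hsub hv) hxβ.1 (fun h => hxβ.2 (h ▸ hv))
    · apply Finset.Subset.antisymm
      · intro y hy
        rcases Finset.mem_insert.1 hy with h | h
        · exact h ▸ hxβ.1
        · exact hsub h
      · intro y hy
        by_cases hyα : y ∈ α
        · exact Finset.mem_insert_of_mem hyα
        · have : y ∈ β \ α := Finset.mem_sdiff.2 ⟨hy, hyα⟩
          rw [hx, Finset.mem_singleton] at this
          exact this ▸ Finset.mem_insert_self _ _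
  · rintro ⟨x, hx, rfl⟩
    have hxα : x ∉ α := fun h => G.irrefl (hx x h)
    refine ⟨⟨insert_clique hα.1 hx, ?_⟩, Finset.subset_insert _ _⟩
    rw [Finset.card_insert_of_notMem hxα, hα.2]
lemma parallel_eq {G : SimpleGraph V} {d : ℕ} {α : Finset V} (hα : G.IsNClique (d + 1) α) :
    parallelSet G d α =
      ⋃ γ ∈ (Finset.powersetCard d α : Finset (Finset V)),
        (fun x => insert x γ) '' (piSet G γ \ (↑α ∪ piSet G α)) := by
  ext α'
  simp only [parallelSet, Set.mem_setOf_eq, Set.mem_iUnion, Set.mem_image,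
    Finset.mem_coe, Finset.mem_powersetCard, Set.mem_diff, Set.mem_union, Finset.mem_coe,
    IsParallelNeighbour, not_or]
  constructor
  · rintro ⟨hc', hne, ⟨γ, hγd, hγα, hγα'⟩, hnoco⟩
    obtain ⟨x, hx⟩ : ∃ x, α' \ γ = {x} := by
      rw [← Finset.card_eq_one, Finset.card_sdiff_of_subset hγα', hc'.2, hγd]; omega
    have hxm : x ∈ α' ∧ x ∉ γ := by
      have := hx ▸ Finset.mem_sdiff (s := α') (t := γ) (a := x)
      simp_all
    have hα'eq : α' = insert x γ := by
      apply Finset.Subset.antisymm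
      · intro y hy
        by_cases hyγ : y ∈ γ
        · exact Finset.mem_insert_of_mem hyγ
        · have : y ∈ α' \ γ := Finset.mem_sdiff.2 ⟨hy, hyγ⟩
          rw [hx, Finset.mem_singleton] at this
          exact this ▸ Finset.mem_insert_self _ _
      · intro y hy
        rcases Finset.mem_insert.1 hy with h | h
        · exact h ▸ hxm.1
        · exact hγα' h
    have hxπ : x ∈ piSet G γ := by
      intro v hv
      exact hc'.1 (hγα' hv) hxm.1 (fun h => hxm.2 (h ▸ hv))
    have hxα : x ∉ α := by
      intro hxα
      apply hne
      apply (Finset.eq_of_subset_of_card_le ?_ ?_).symm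
      · rw [hα'eq]
        exact Finset.insert_subset hxα hγα
      · rw [hc'.2, hα.2]
    refine ⟨γ, ⟨hγα, hγd⟩, x, ⟨hxπ, hxα, ?_⟩, hα'eq.symm⟩
    intro hxπα
    exact hnoco ⟨insert x α, ⟨insert_clique hα.1 hxπα, by
        rw [Finset.card_insert_of_notMem hxα, hα.2]⟩, Finset.subset_insert _ _, by
      rw [hα'eq]
      exact Finset.insert_subset_insert _ hγα⟩
  · rintro ⟨γ, ⟨hγα, hγd⟩, x, ⟨hxπ, hxα, hxπα⟩, rfl⟩
    have hxγ : x ∉ γ := pi_not_mem hxπ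
    have hcard : (insert x γ).card = d + 1 := by rw [Finset.card_insert_of_notMem hxγ, hγd]
    refine ⟨⟨insert_clique (hα.1.subset (Finset.coe_subset.2 hγα)) hxπ, hcard⟩, ?_, ?_, ?_⟩
    · intro h
      exact hxα (h ▸ Finset.mem_insert_self x γ)
    · exact ⟨γ, hγd, hγα, Finset.subset_insert _ _⟩
    · rintro ⟨β, hβ, hαβ, hα'β⟩
      have hsub : insert x α ⊆ β :=
        Finset.insert_subset (hα'β (Finset.mem_insert_self _ _)) hαβ
      have hβeq : β = insert x α := by
        apply (Finset.eq_of_subset_of_card_le hsub ?_).symm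
        rw [hβ.2, Finset.card_insert_of_notMem hxα, hα.2]
      apply hxπα
      intro v hv
      exact hβ.1 (hαβ hv) (hsub (Finset.mem_insert_self _ _))
        (fun h => hxα (h ▸ hv))

lemma parallel_card [Fintype V] {G : SimpleGraph V} {d : ℕ} {α : Finset V}
    (hα : G.IsNClique (d + 1) α) :
    (parallelSet G d α).ncard =
      ∑ γ ∈ Finset.powersetCard d α, (piSet G γ \ (↑α ∪ piSet G α)).ncard := by
  classical
  rw [parallel_eq hα]
  have h1 : (⋃ γ ∈ (Finset.powersetCard d α : Finset (Finset V)),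
        (fun x => insert x γ) '' (piSet G γ \ (↑α ∪ piSet G α)))
      = ↑((Finset.powersetCard d α).biUnion
          (fun γ => ((piSet G γ \ (↑α ∪ piSet G α)).toFinset).image (fun x => insert x γ))) := by
    simp [Set.coe_toFinset]
  rw [h1, Set.ncard_coe_finset, Finset.card_biUnion]
  · refine Finset.sum_congr rfl fun γ hγ => ?_
    rw [Finset.card_image_of_injOn, Set.ncard_eq_toFinset_card']
    intro x hx y hy hxy
    simp only [Finset.mem_coe, Set.mem_toFinset] at hx hy
    have hxγ : x ∉ γ := pi_not_mem hx.1
    have hxy' : insert x γ = insert y γ := hxy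
    rcases Finset.mem_insert.1 (hxy' ▸ Finset.mem_insert_self x γ) with h | h
    · exact h
    · exact absurd h hxγ
  · intro γ hγ δ hδ hne
    rw [Finset.mem_coe, Finset.mem_powersetCard] at hγ hδ
    simp only [Function.onFun, Finset.disjoint_left, Finset.mem_image]
    rintro β ⟨x, hx, rfl⟩ ⟨y, hy, hxy⟩
    rw [Set.mem_toFinset] at hx hy
    have h1 : (insert x γ) ∩ α = γ := inter_eq hγ.1 (fun h => hx.2 (Or.inl h))
    have h2 : (insert y δ) ∩ α = δ := inter_eq hδ.1 (fun h => hy.2 (Or.inl h))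
    exact hne (h1 ▸ h2 ▸ (hxy ▸ rfl : (insert x γ) ∩ α = (insert y δ) ∩ α))

lemma pi_card [Fintype V] {G : SimpleGraph V} {d : ℕ} {α γ : Finset V}
    (hα : G.IsNClique (d + 1) α) (hγ : γ ∈ Finset.powersetCard d α) :
    (piSet G γ).ncard = (piSet G γ \ (↑α ∪ piSet G α)).ncard + (piSet G α).ncard + 1 := by
  classical
  obtain ⟨hγα, hγd⟩ := Finset.mem_powersetCard.1 hγ
  have hdisj1 : Disjoint (piSet G α) (↑(α \ γ) : Set V) := by
    rw [Set.disjoint_left]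
    intro x hx hx2
    rw [Finset.coe_sdiff, Set.mem_diff, Finset.mem_coe] at hx2
    exact G.irrefl (hx x hx2.1)
  have hdisj2 : Disjoint (piSet G γ \ (↑α ∪ piSet G α)) (piSet G α ∪ ↑(α \ γ)) := by
    rw [Set.disjoint_left]
    rintro x ⟨_, hx2⟩ (h | h)
    · exact hx2 (Or.inr h)
    · rw [Finset.coe_sdiff, Set.mem_diff, Finset.mem_coe] at h
      exact hx2 (Or.inl h.1)
  have heq : piSet G γ = (piSet G γ \ (↑α ∪ piSet G α)) ∪ (piSet G α ∪ ↑(α \ γ)) := by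
    ext x
    constructor
    · intro hx
      by_cases hxα : x ∈ α
      · exact Or.inr (Or.inr (by
          rw [Finset.coe_sdiff, Set.mem_diff, Finset.mem_coe]
          exact ⟨hxα, pi_not_mem hx⟩))
      · by_cases hxπα : x ∈ piSet G α
        · exact Or.inr (Or.inl hxπα)
        · exact Or.inl ⟨hx, fun h => h.elim hxα hxπα⟩
    · rintro (hx | hx | hx)
      · exact hx.1
      · exact pi_anti hγα hx
      · rw [Finset.coe_sdiff, Set.mem_diff, Finset.mem_coe] at hx
        exact mem_pi_of_clique hα.1 hγα hx.1 hx.2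
  conv_lhs => rw [heq]
  rw [Set.ncard_union_eq hdisj2 (Set.toFinite _) (Set.toFinite _),
    Set.ncard_union_eq hdisj1 (Set.toFinite _) (Set.toFinite _), Set.ncard_coe_finset,
    Finset.card_sdiff_of_subset hγα, hα.2, hγd]
  omega

/-- For any `d`-face `α` (`d ≥ 1`) of the clique complex of `G`, the
Forman–Ricci curvature `F(α) = |H_α| + (d+1) − |P_α|` admits the set-theoretic
formula `F(α) = (d+2)·|⋂_{γ ∈ ∂α} π_γ| + 2(d+1) − Σ_{γ ∈ ∂α} |π_γ|`. -/
theorem FRC_set_theoretic_formula [Fintype V] (G : SimpleGraph V) (d : ℕ)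
    (hd : 1 ≤ d) (α : Finset V) (hα : G.IsNClique (d + 1) α) :
    ((cofaceSet G d α).ncard : ℤ) + (d + 1) - (parallelSet G d α).ncard =
      (d + 2) *
          ((⋂ γ ∈ (Finset.powersetCard d α : Finset (Finset V)), piSet G γ).ncard : ℤ)
        + 2 * (d + 1)
        - ∑ γ ∈ Finset.powersetCard d α, ((piSet G γ).ncard : ℤ) := by
  have hH : (cofaceSet G d α).ncard = (piSet G α).ncard := by
    have hc : cofaceSet G d α = (fun x => insert x α) '' piSet G α := coface_eq hα
    rw [hc, Set.ncard_image_of_injOn]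
    intro x hx y hy hxy
    have hxy' : insert x α = insert y α := hxy
    rcases Finset.mem_insert.1 (hxy' ▸ Finset.mem_insert_self x α) with h | h
    · exact h
    · exact absurd h (pi_not_mem hx)
  have hsum : ∑ γ ∈ Finset.powersetCard d α, ((piSet G γ).ncard : ℤ) =
      (∑ γ ∈ Finset.powersetCard d α,
        ((piSet G γ \ (↑α ∪ piSet G α)).ncard : ℤ)) + (d + 1) * ((piSet G α).ncard + 1) := by
    have hterm : ∀ γ ∈ Finset.powersetCard d α, ((piSet G γ).ncard : ℤ) =
        ((piSet G γ \ (↑α ∪ piSet G α)).ncard : ℤ) + (((piSet G α).ncard : ℤ) + 1) :=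
      fun γ hγ => by rw [pi_card hα hγ]; push_cast; ring
    rw [Finset.sum_congr rfl hterm, Finset.sum_add_distrib, Finset.sum_const,
      Finset.card_powersetCard, hα.2, Nat.choose_succ_self_right]
    push_cast
    ring
  rw [iInter_pi_eq hd hα, hH, parallel_card hα, hsum]
  push_cast
  ring
end
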